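/- Let n ≥ 3 and d ≥ 2 be integers. Then every matrix M ∈ S(H(d,n)) has at least 3 distinct eigenvalues, i.e. q(H(d,n)) ≥ 3. Moreover, for d = 2 the adjacency matrix of H(2,n) has exactly 3 distinct eigenvalues, so q(H(2,n)) = 3. -/

import Mathlib

open Matrix Kronecker

/-- `S(G)`: real symmetric matrices whose off-diagonal zero/nonzero pattern
matches the adjacency of `G`; the diagonal is unconstrained. -/
def Sset {V : Type*} [Fintype V] [DecidableEq V] (G : SimpleGraph V) : Set (Matrix V V ℝ) :=
  {M | M.IsSymm ∧ ∀ u v : V, u ≠ v → (M u v ≠ 0 ↔ G.Adj u v)}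

/-- `q(G)`: the minimum number of distinct eigenvalues over matrices in `S(G)`. -/
noncomputable def minQ {V : Type*} [Fintype V] [DecidableEq V] (G : SimpleGraph V) : ℕ :=
  sInf {k : ℕ | ∃ M ∈ Sset G, (spectrum ℝ M).ncard = k}

/-- The Hamming graph `H(d,n)`: vertices are `d`-tuples over an `n`-set, adjacent iff
they differ in exactly one coordinate. -/
def HammingG (d n : ℕ) : SimpleGraph (Fin d → Fin n) where
  Adj u v := hammingDist u v = 1
  symm := ⟨fun u v (h : hammingDist u v = 1) => by show hammingDist v u = 1; rwa [hammingDist_comm]⟩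
  loopless := ⟨fun u (h : hammingDist u u = 1) => by simp [hammingDist_self] at h⟩

/-- The adjacency matrix of the Hamming graph `H(d,n)` over `ℝ`. -/
def HammingAdjM (d n : ℕ) : Matrix (Fin d → Fin n) (Fin d → Fin n) ℝ :=
  fun u v => if hammingDist u v = 1 then 1 else 0

section Spectral

variable {V : Type*} [Fintype V] [DecidableEq V]

/-- A real symmetric matrix whose spectrum lies in a pair satisfies a quadratic equation. -/
lemma symm_quadratic {M : Matrix V V ℝ} (hsym : M.IsSymm) {a b : ℝ}
    (hs : spectrum ℝ M ⊆ {a, b}) :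
    M * M = (a + b) • M - (a * b) • 1 := by
  have hH : M.IsHermitian := by
    rw [Matrix.IsHermitian, conjTranspose_eq_transpose_of_trivial]; exact hsym
  have hev : ∀ i, hH.eigenvalues i = a ∨ hH.eigenvalues i = b := by
    intro i
    have := hs (hH.eigenvalues_mem_spectrum_real i)
    simpa using this
  set U : Matrix V V ℝ := (hH.eigenvectorUnitary : Matrix V V ℝ) with hU
  have hU1 : (U : Matrix V V ℝ) * star (U : Matrix V V ℝ) = 1 :=
    Matrix.mem_unitaryGroup_iff.mp hH.eigenvectorUnitary.2
  have hU2 : star (U : Matrix V V ℝ) * (U : Matrix V V ℝ) = 1 :=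
    Matrix.mem_unitaryGroup_iff'.mp hH.eigenvectorUnitary.2
  have hD : (RCLike.ofReal ∘ hH.eigenvalues : V → ℝ) = hH.eigenvalues := by
    funext i; simp
  have hspec := hH.spectral_theorem
  rw [hD, Unitary.conjStarAlgAut_apply] at hspec
  set D : Matrix V V ℝ := diagonal hH.eigenvalues with hDdef
  have hDD : D * D = (a + b) • D - (a * b) • 1 := by
    rw [hDdef, diagonal_mul_diagonal]
    ext i j
    rcases eq_or_ne i j with rfl | hij
    · rcases hev i with h | h <;>
        simp [h, Matrix.sub_apply, Matrix.smul_apply, Matrix.one_apply] <;> ring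
    · simp [Matrix.sub_apply, Matrix.smul_apply, Matrix.one_apply, hij,
        diagonal_apply_ne _ hij]
  calc M * M = (U * D * star (U : Matrix V V ℝ)) * (U * D * star (U : Matrix V V ℝ)) := by
        rw [← hspec]
    _ = U * D * (star (U : Matrix V V ℝ) * U) * D * star (U : Matrix V V ℝ) := by
        simp only [Matrix.mul_assoc]
    _ = U * (D * D) * star (U : Matrix V V ℝ) := by rw [hU2]; simp only [Matrix.mul_assoc, Matrix.one_mul]
    _ = (a + b) • (U * D * star (U : Matrix V V ℝ)) - (a * b) • (U * star (U : Matrix V V ℝ)) := by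
        rw [hDD]; simp only [Matrix.mul_sub, Matrix.sub_mul, mul_smul_comm, smul_mul_assoc,
          Matrix.mul_one]
    _ = (a + b) • M - (a * b) • 1 := by rw [← hspec, hU1]

lemma eig_mem_spectrum {N : Matrix V V ℝ} {c : ℝ} {v : V → ℝ}
    (hv : v ≠ 0) (hev : N *ᵥ v = c • v) : c ∈ spectrum ℝ N := by
  rw [spectrum.mem_iff]
  intro h
  obtain ⟨u, hu⟩ := h
  have h0 : (algebraMap ℝ (Matrix V V ℝ) c - N) *ᵥ v = 0 := by
    rw [sub_mulVec, Algebra.algebraMap_eq_smul_one, smul_mulVec, one_mulVec, hev, sub_self]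
  apply hv
  calc v = ((↑u⁻¹ : Matrix V V ℝ) * ↑u) *ᵥ v := by rw [Units.inv_mul, one_mulVec]
    _ = (↑u⁻¹ : Matrix V V ℝ) *ᵥ ((↑u : Matrix V V ℝ) *ᵥ v) := by rw [mulVec_mulVec]
    _ = 0 := by rw [hu, h0, mulVec_zero]

lemma spectrum_exists_eigvec {N : Matrix V V ℝ} {c : ℝ} (h : c ∈ spectrum ℝ N) :
    ∃ v : V → ℝ, v ≠ 0 ∧ N *ᵥ v = c • v := by
  rw [spectrum.mem_iff] at h
  have hdet : (algebraMap ℝ (Matrix V V ℝ) c - N).det = 0 := by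
    by_contra hd
    exact h ((Matrix.isUnit_iff_isUnit_det _).2 (isUnit_iff_ne_zero.2 hd))
  obtain ⟨v, hv0, hv⟩ := (Matrix.exists_mulVec_eq_zero_iff).2 hdet
  refine ⟨v, hv0, ?_⟩
  rw [sub_mulVec, Algebra.algebraMap_eq_smul_one, smul_mulVec, one_mulVec,
    sub_eq_zero] at hv
  exact hv.symm

end Spectral

section Core

variable {n d : ℕ} [NeZero n]

/-- The vertex of the Hamming graph with first coordinate `x`, second `y`, rest `0`. -/
def ee (n d : ℕ) [NeZero n] (x y : Fin n) : Fin d → Fin n :=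
  fun t => if (t : ℕ) = 0 then x else if (t : ℕ) = 1 then y else 0

lemma ee_ne_iff (x x' y y' : Fin n) (t : Fin d) :
    ee n d x y t ≠ ee n d x' y' t ↔ ((t : ℕ) = 0 ∧ x ≠ x') ∨ ((t : ℕ) = 1 ∧ y ≠ y') := by
  by_cases h0 : (t : ℕ) = 0
  · have h1 : ¬ (t : ℕ) = 1 := by omega
    simp [ee, h0, h1]
  · by_cases h1 : (t : ℕ) = 1
    · simp [ee, h0, h1]
    · simp [ee, h0, h1]

lemma dist_ee (hd : 2 ≤ d) (x x' y y' : Fin n) :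
    hammingDist (ee n d x y) (ee n d x' y') =
      (if x = x' then 0 else 1) + (if y = y' then 0 else 1) := by
  have t0 : Fin d := ⟨0, by omega⟩
  show (Finset.univ.filter fun t => ee n d x y t ≠ ee n d x' y' t).card = _
  by_cases hx : x = x' <;> by_cases hy : y = y'
  · have : (Finset.univ.filter fun t => ee n d x y t ≠ ee n d x' y' t) = ∅ := by
      ext t
      simp only [Finset.mem_filter, Finset.mem_univ, true_and, ee_ne_iff]
      simp [hx, hy]
    simp [this, hx, hy]
  · have : (Finset.univ.filter fun t => ee n d x y t ≠ ee n d x' y' t) = {⟨1, by omega⟩} := by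
      ext t
      simp only [Finset.mem_filter, Finset.mem_univ, true_and, ee_ne_iff]
      simp [hx, hy, Fin.ext_iff]
    rw [this]; simp [hx, hy]
  · have : (Finset.univ.filter fun t => ee n d x y t ≠ ee n d x' y' t) = {⟨0, by omega⟩} := by
      ext t
      simp only [Finset.mem_filter, Finset.mem_univ, true_and, ee_ne_iff]
      simp [hx, hy, Fin.ext_iff]
    rw [this]; simp [hx, hy]
  · have : (Finset.univ.filter fun t => ee n d x y t ≠ ee n d x' y' t)
        = {⟨0, by omega⟩, ⟨1, by omega⟩} := by
      ext t
      simp only [Finset.mem_filter, Finset.mem_univ, true_and, ee_ne_iff]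
      simp [hx, hy, Fin.ext_iff]
    rw [this, Finset.card_pair (by simp [Fin.ext_iff])]
    simp [hx, hy]

lemma ee_ne (hd : 2 ≤ d) {x x' : Fin n} (hx : x ≠ x') (y y' : Fin n) :
    ee n d x y ≠ ee n d x' y' := by
  intro h
  apply hx
  have := congrFun h ⟨0, by omega⟩
  simpa [ee] using this

lemma common_neighbor (hd : 2 ≤ d) {x x' y y' : Fin n} (hx : x ≠ x') (hy : y ≠ y')
    {v : Fin d → Fin n} (h1 : hammingDist (ee n d x y) v = 1)
    (h2 : hammingDist v (ee n d x' y') = 1) :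
    v = ee n d x' y ∨ v = ee n d x y' := by
  set u := ee n d x y with hu
  set w := ee n d x' y' with hw
  have t0 : Fin d := ⟨0, by omega⟩
  obtain ⟨a, ha⟩ := Finset.card_eq_one.mp h1
  obtain ⟨b, hb⟩ := Finset.card_eq_one.mp h2
  have hua : ∀ t, u t ≠ v t ↔ t = a := by
    intro t
    constructor
    · intro ht
      have : t ∈ (Finset.univ.filter fun i => u i ≠ v i) := by simp [ht]
      rw [ha] at this; simpa using this
    · intro ht
      have : t ∈ (Finset.univ.filter fun i => u i ≠ v i) := by rw [ha, ht]; simp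
      simpa using this
  have hvb : ∀ t, v t ≠ w t ↔ t = b := by
    intro t
    constructor
    · intro ht
      have : t ∈ (Finset.univ.filter fun i => v i ≠ w i) := by simp [ht]
      rw [hb] at this; simpa using this
    · intro ht
      have : t ∈ (Finset.univ.filter fun i => v i ≠ w i) := by rw [hb, ht]; simp
      simpa using this
  have huw : ∀ t : Fin d, u t ≠ w t ↔ ((t : ℕ) = 0 ∨ (t : ℕ) = 1) := by
    intro t
    rw [hu, hw, ee_ne_iff]
    constructor
    · rintro (⟨h, _⟩ | ⟨h, _⟩); exacts [Or.inl h, Or.inr h]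
    · rintro (h | h); exacts [Or.inl ⟨h, hx⟩, Or.inr ⟨h, hy⟩]
  have key : ∀ t : Fin d, u t ≠ w t → (t = a ∨ t = b) := by
    intro t ht
    by_contra hc
    push_neg at hc
    have e1 : u t = v t := by
      by_contra h; exact hc.1 ((hua t).mp h)
    have e2 : v t = w t := by
      by_contra h; exact hc.2 ((hvb t).mp h)
    exact ht (e1.trans e2)
  set T0 : Fin d := ⟨0, by omega⟩ with hT0def
  set T1 : Fin d := ⟨1, by omega⟩ with hT1def
  have hT : T0 ≠ T1 := by simp [hT0def, hT1def, Fin.ext_iff]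
  have hT0 : T0 = a ∨ T0 = b := key T0 ((huw T0).mpr (Or.inl rfl))
  have hT1 : T1 = a ∨ T1 = b := key T1 ((huw T1).mpr (Or.inr rfl))
  rcases hT0 with h0 | h0 <;> rcases hT1 with h1 | h1
  · exact absurd (h0.trans h1.symm) hT
  · -- a = T0, b = T1 : v = ee n d x' y
    left
    have hav : (a : ℕ) = 0 := by rw [← h0]
    have hbv : (b : ℕ) = 1 := by rw [← h1]
    funext t
    by_cases ht0 : (t : ℕ) = 0
    · have hvw : v t = w t := by
        by_contra h
        have := (hvb t).mp h
        rw [this] at ht0; omega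
      rw [hvw, hw]
      simp [ee, ht0]
    · by_cases ht1 : (t : ℕ) = 1
      · have huv : u t = v t := by
          by_contra h
          have := (hua t).mp h
          rw [this] at ht0; omega
        rw [← huv, hu]
        simp [ee, ht0, ht1]
      · have huv : u t = v t := by
          by_contra h
          have := (hua t).mp h
          rw [this] at ht0; omega
        rw [← huv, hu]
        simp [ee, ht0, ht1]
  · -- a = T1, b = T0 : v = ee n d x y'
    right
    have hav : (a : ℕ) = 1 := by rw [← h1]
    have hbv : (b : ℕ) = 0 := by rw [← h0]
    funext t
    by_cases ht0 : (t : ℕ) = 0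
    · have hvw : u t = v t := by
        by_contra h
        have := (hua t).mp h
        rw [this] at ht0; omega
      rw [← hvw, hu]
      simp [ee, ht0]
    · by_cases ht1 : (t : ℕ) = 1
      · have hvw : v t = w t := by
          by_contra h
          have := (hvb t).mp h
          rw [this] at ht1; omega
        rw [hvw, hw]
        simp [ee, ht0, ht1]
      · have huv : u t = v t := by
          by_contra h
          have := (hua t).mp h
          rw [this] at ht1; omega
        rw [← huv, hu]
        simp [ee, ht0, ht1]
  · exact absurd (h0.trans h1.symm) hT

set_option maxHeartbeats 1600000 in
lemma no_two (hn : 3 ≤ n) (hd : 2 ≤ d) {M : Matrix (Fin d → Fin n) (Fin d → Fin n) ℝ}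
    (hM : M ∈ Sset (HammingG d n)) (α β : ℝ) (hq : M * M = α • M + β • 1) : False := by
  obtain ⟨hsym, hpat⟩ := hM
  -- the entries along "rows" (first coordinate) and "columns" (second coordinate)
  have hadj : ∀ u v : Fin d → Fin n, hammingDist u v = 1 → M u v ≠ 0 := by
    intro u v h
    refine (hpat u v ?_).mpr h
    intro he; rw [he, hammingDist_self] at h; omega
  have hnadj : ∀ u v : Fin d → Fin n, u ≠ v → hammingDist u v ≠ 1 → M u v = 0 := by
    intro u v hne h
    by_contra h0
    exact h ((hpat u v hne).mp h0)
  -- the key quadratic relation at distance-two pairs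
  have key : ∀ x x' y y' : Fin n, x ≠ x' → y ≠ y' →
      M (ee n d x y) (ee n d x' y) * M (ee n d x' y) (ee n d x' y') +
      M (ee n d x y) (ee n d x y') * M (ee n d x y') (ee n d x' y') = 0 := by
    intro x x' y y' hx hy
    set u := ee n d x y with hu
    set w := ee n d x' y' with hw
    have huw : u ≠ w := ee_ne hd hx y y'
    have hdist : hammingDist u w = 2 := by
      rw [hu, hw, dist_ee hd]; simp [hx, hy]
    have hMuw : M u w = 0 := hnadj u w huw (by omega)
    have h0 : (M * M) u w = 0 := by
      rw [hq]
      simp [Matrix.add_apply, Matrix.smul_apply, Matrix.one_apply, huw, hMuw]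
    rw [Matrix.mul_apply] at h0
    rw [← h0]
    symm
    apply Finset.sum_eq_add (ee n d x' y) (ee n d x y')
    · exact ee_ne hd (Ne.symm hx) y y'
    · intro c _ hc
      by_cases hcu : c = u
      · rw [hcu, hMuw, mul_zero]
      by_cases hcw : c = w
      · rw [hcw]
        rw [hMuw]  -- M u c = M u w = 0
        rw [zero_mul]
      by_contra hne0
      have hn1 : M u c ≠ 0 := left_ne_zero_of_mul hne0
      have hn2 : M c w ≠ 0 := right_ne_zero_of_mul hne0
      have h1 : hammingDist u c = 1 := (hpat u c (fun h => hcu h.symm)).mp hn1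
      have h2 : hammingDist c w = 1 := (hpat c w hcw).mp hn2
      rcases common_neighbor hd hx hy h1 h2 with h | h
      · exact hc.1 h
      · exact hc.2 h
    · intro h; exact absurd (Finset.mem_univ _) h
    · intro h; exact absurd (Finset.mem_univ _) h
  -- the sign inequality
  have sign : ∀ x x' y y' : Fin n, x ≠ x' → y ≠ y' →
      (M (ee n d x y) (ee n d x' y) * M (ee n d x y') (ee n d x' y')) *
      (M (ee n d x y) (ee n d x y') * M (ee n d x' y) (ee n d x' y')) < 0 := by
    intro x x' y y' hx hy
    have hk := key x x' y y' hx hy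
    set A1 := M (ee n d x y) (ee n d x' y) with hA1
    set A2 := M (ee n d x y') (ee n d x' y') with hA2
    set B1 := M (ee n d x y) (ee n d x y') with hB1
    set B2 := M (ee n d x' y) (ee n d x' y') with hB2
    have hA2ne : A2 ≠ 0 := hadj _ _ (by rw [dist_ee hd]; simp [hx])
    have hB1ne : B1 ≠ 0 := hadj _ _ (by rw [dist_ee hd]; simp [hy])
    have heq : (A1 * A2) * (B1 * B2) = -((B1 * A2) ^ 2) := by
      linear_combination (B1 * A2) * hk
    rw [heq]
    have hz : B1 * A2 ≠ 0 := mul_ne_zero hB1ne hA2ne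
    have : (B1 * A2) ^ 2 ≠ 0 := pow_ne_zero 2 hz
    have h2 := sq_nonneg (B1 * A2)
    have : 0 < (B1 * A2) ^ 2 := lt_of_le_of_ne h2 (Ne.symm this)
    linarith
  -- three fixed columns
  set y0 : Fin n := ⟨0, by omega⟩ with hy0
  set y1 : Fin n := ⟨1, by omega⟩ with hy1
  set y2 : Fin n := ⟨2, by omega⟩ with hy2
  have hy01 : y0 ≠ y1 := by simp [hy0, hy1, Fin.ext_iff]
  have hy12 : y1 ≠ y2 := by simp [hy1, hy2, Fin.ext_iff]
  have hy02 : y0 ≠ y2 := by simp [hy0, hy2, Fin.ext_iff]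
  set bf : Fin n → ℝ := fun x =>
    M (ee n d x y0) (ee n d x y1) * M (ee n d x y1) (ee n d x y2) *
    M (ee n d x y0) (ee n d x y2) with hbf
  have hbfneg : ∀ x x' : Fin n, x ≠ x' → bf x * bf x' < 0 := by
    intro x x' hx
    have s01 := sign x x' y0 y1 hx hy01
    have s12 := sign x x' y1 y2 hx hy12
    have s02 := sign x x' y0 y2 hx hy02
    set A0 := M (ee n d x y0) (ee n d x' y0) with hA0'
    set A1 := M (ee n d x y1) (ee n d x' y1) with hA1'
    set A2 := M (ee n d x y2) (ee n d x' y2) with hA2'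
    have hA0ne : A0 ≠ 0 := hadj _ _ (by rw [dist_ee hd]; simp [hx])
    have hA1ne : A1 ≠ 0 := hadj _ _ (by rw [dist_ee hd]; simp [hx])
    have hA2ne : A2 ≠ 0 := hadj _ _ (by rw [dist_ee hd]; simp [hx])
    have hprod := mul_neg_of_pos_of_neg (mul_pos_of_neg_of_neg s01 s12) s02
    have hsq : (0:ℝ) < (A0 * A1 * A2) ^ 2 := by
      have := pow_ne_zero 2 (mul_ne_zero (mul_ne_zero hA0ne hA1ne) hA2ne)
      exact lt_of_le_of_ne (sq_nonneg _) (Ne.symm this)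
    by_contra hcon
    push_neg at hcon
    have hge : 0 ≤ (A0 * A1 * A2) ^ 2 * (bf x * bf x') := mul_nonneg hsq.le hcon
    have hEq : (A0 * A1 * A2) ^ 2 * (bf x * bf x') =
        A0 * A1 * (M (ee n d x y0) (ee n d x y1) * M (ee n d x' y0) (ee n d x' y1)) *
        (A1 * A2 * (M (ee n d x y1) (ee n d x y2) * M (ee n d x' y1) (ee n d x' y2))) *
        (A0 * A2 * (M (ee n d x y0) (ee n d x y2) * M (ee n d x' y0) (ee n d x' y2))) := by
      simp only [hbf, hA0', hA1', hA2']
      ring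
    rw [hEq] at hge
    linarith [hprod]
  set x0 : Fin n := ⟨0, by omega⟩ with hx0
  set x1 : Fin n := ⟨1, by omega⟩ with hx1
  set x2 : Fin n := ⟨2, by omega⟩ with hx2
  have s01 := hbfneg x0 x1 (by simp [hx0, hx1, Fin.ext_iff])
  have s12 := hbfneg x1 x2 (by simp [hx1, hx2, Fin.ext_iff])
  have s02 := hbfneg x0 x2 (by simp [hx0, hx2, Fin.ext_iff])
  have h1 : 0 < (bf x0 * bf x1) * (bf x1 * bf x2) := mul_pos_of_neg_of_neg s01 s12
  have h2 : (bf x0 * bf x1) * (bf x1 * bf x2) * (bf x0 * bf x2) < 0 :=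
    mul_neg_of_pos_of_neg h1 s02
  have h3 : (bf x0 * bf x1) * (bf x1 * bf x2) * (bf x0 * bf x2)
      = (bf x0 * bf x1 * bf x2) ^ 2 := by ring
  rw [h3] at h2
  exact absurd h2 (not_lt.mpr (sq_nonneg _))

end Core

section Rook

variable (n : ℕ)

noncomputable def Jmat : Matrix (Fin n) (Fin n) ℝ := Matrix.of fun _ _ => 1

noncomputable def Bmat : Matrix (Fin n) (Fin n) ℝ := Jmat n + (-1 : ℝ) • 1

/-- The adjacency matrix of the rook's graph `K_n □ K_n`. -/
noncomputable def A2 : Matrix (Fin n × Fin n) (Fin n × Fin n) ℝ :=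
  Bmat n ⊗ₖ 1 + 1 ⊗ₖ Bmat n

lemma JmulJ : Jmat n * Jmat n = (n : ℝ) • Jmat n := by
  ext i j
  simp [Jmat, Matrix.mul_apply, Matrix.smul_apply]

lemma BmulJ : Bmat n * Jmat n = ((n : ℝ) - 1) • Jmat n := by
  simp only [Bmat, add_mul, smul_mul_assoc, one_mul, JmulJ]
  module

lemma BmulB : Bmat n * Bmat n = ((n : ℝ) - 2) • Jmat n + 1 := by
  simp only [Bmat, add_mul, mul_add, smul_mul_assoc, mul_smul_comm, one_mul, mul_one,
    JmulJ, smul_smul]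
  norm_num
  module

lemma A2mulJJ : A2 n * (Jmat n ⊗ₖ Jmat n) = (2 * (n : ℝ) - 2) • (Jmat n ⊗ₖ Jmat n) := by
  rw [A2, add_mul, ← mul_kronecker_mul, ← mul_kronecker_mul]
  simp only [one_mul, mul_one, BmulJ, smul_kronecker, kronecker_smul]
  module

lemma A2sq : A2 n * A2 n = ((n : ℝ) - 4) • A2 n + (2 * (n : ℝ) - 4) • 1
    + 2 • (Jmat n ⊗ₖ Jmat n) := by
  have hBkB : Bmat n ⊗ₖ Bmat n
      = Jmat n ⊗ₖ Jmat n + (-1 : ℝ) • (Jmat n ⊗ₖ 1) + (-1 : ℝ) • (1 ⊗ₖ Jmat n) + 1 := by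
    simp only [Bmat, add_kronecker, kronecker_add, smul_kronecker, kronecker_smul,
      one_kronecker_one, smul_smul]
    norm_num
    module
  have hA2' : A2 n = Jmat n ⊗ₖ 1 + 1 ⊗ₖ Jmat n + (-2 : ℝ) • 1 := by
    simp only [A2, Bmat, add_kronecker, kronecker_add, smul_kronecker, kronecker_smul,
      one_kronecker_one]
    module
  rw [A2, add_mul, mul_add, mul_add]
  simp only [← mul_kronecker_mul, one_mul, mul_one, BmulB, hBkB]
  have h1 : (((n : ℝ) - 2) • Jmat n + 1) ⊗ₖ (1 : Matrix (Fin n) (Fin n) ℝ)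
      = ((n : ℝ) - 2) • (Jmat n ⊗ₖ 1) + 1 := by
    rw [add_kronecker, smul_kronecker, one_kronecker_one]
  have h2 : (1 : Matrix (Fin n) (Fin n) ℝ) ⊗ₖ (((n : ℝ) - 2) • Jmat n + 1)
      = ((n : ℝ) - 2) • (1 ⊗ₖ Jmat n) + 1 := by
    rw [kronecker_add, kronecker_smul, one_kronecker_one]
  rw [h1, h2]
  simp only [Bmat, add_kronecker, kronecker_add, smul_kronecker, kronecker_smul,
    one_kronecker_one]
  module

lemma A2cubic :
    (A2 n - (2 * (n : ℝ) - 2) • 1) * ((A2 n - ((n : ℝ) - 2) • 1) * (A2 n + (2 : ℝ) • 1))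
      = 0 := by
  have hinner : (A2 n - ((n : ℝ) - 2) • 1) * (A2 n + (2 : ℝ) • 1)
      = 2 • (Jmat n ⊗ₖ Jmat n) := by
    rw [sub_mul, mul_add, mul_add]
    simp only [smul_mul_assoc, mul_smul_comm, one_mul, mul_one]
    rw [A2sq]
    module
  rw [hinner]
  have : (A2 n - (2 * (n : ℝ) - 2) • 1) * (2 • (Jmat n ⊗ₖ Jmat n))
      = 2 • (A2 n * (Jmat n ⊗ₖ Jmat n)) - 2 • ((2 * (n : ℝ) - 2) • (Jmat n ⊗ₖ Jmat n)) := by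
    rw [sub_mul]
    simp only [mul_smul_comm, smul_mul_assoc, one_mul]
  rw [this, A2mulJJ]
  simp [smul_smul]

lemma A2_mulVec (F G : Fin n → ℝ) :
    A2 n *ᵥ (fun p => F p.1 * G p.2) = fun p =>
      ((∑ k, F k) - F p.1) * G p.2 + F p.1 * ((∑ l, G l) - G p.2) := by
  funext p
  rw [A2, add_mulVec]
  have hB : ∀ (i k : Fin n), Bmat n i k = (if i = k then 0 else 1) := by
    intro i k
    by_cases h : i = k <;>
      simp [Bmat, Jmat, Matrix.add_apply, Matrix.smul_apply, Matrix.one_apply, h]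
  have key : ∀ (C D : Matrix (Fin n) (Fin n) ℝ),
      ((C ⊗ₖ D) *ᵥ (fun q : Fin n × Fin n => F q.1 * G q.2)) p
        = (∑ k, C p.1 k * F k) * (∑ l, D p.2 l * G l) := by
    intro C D
    show ∑ q : Fin n × Fin n, (C ⊗ₖ D) p q * (F q.1 * G q.2) = _
    rw [Fintype.sum_prod_type]
    rw [Finset.sum_mul]
    refine Finset.sum_congr rfl fun k _ => ?_
    rw [Finset.mul_sum]
    refine Finset.sum_congr rfl fun l _ => ?_
    have : (C ⊗ₖ D) p (k, l) = C p.1 k * D p.2 l := by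
      cases p; rfl
    rw [this]
    ring
  have hsum : ∀ (H : Fin n → ℝ) (i : Fin n), (∑ k, Bmat n i k * H k) = (∑ k, H k) - H i := by
    intro H i
    have hterm : ∀ k, Bmat n i k * H k = H k - (if i = k then H k else 0) := by
      intro k; rw [hB]; split <;> simp
    rw [Finset.sum_congr rfl fun k _ => hterm k, Finset.sum_sub_distrib, Finset.sum_ite_eq]
    simp
  have hone : ∀ (H : Fin n → ℝ) (i : Fin n),
      (∑ k, (1 : Matrix (Fin n) (Fin n) ℝ) i k * H k) = H i := by
    intro H i
    simp [Matrix.one_apply, ite_mul]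
  show ((Bmat n ⊗ₖ (1 : Matrix (Fin n) (Fin n) ℝ)) *ᵥ (fun q : Fin n × Fin n => F q.1 * G q.2)) p
      + (((1 : Matrix (Fin n) (Fin n) ℝ) ⊗ₖ Bmat n) *ᵥ (fun q : Fin n × Fin n => F q.1 * G q.2)) p = _
  rw [key, key, hsum, hsum, hone, hone]

lemma spectrum_A2 (hn : 3 ≤ n) :
    spectrum ℝ (A2 n) = {2 * (n : ℝ) - 2, (n : ℝ) - 2, -2} := by
  have hNe : NeZero n := ⟨by omega⟩
  have hval1 : ((1 : Fin n) : ℕ) = 1 := by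
    rw [Fin.val_one']
    exact Nat.mod_eq_of_lt (by omega)
  have h01 : (0 : Fin n) ≠ 1 := by
    rw [Fin.ne_iff_vne, hval1]
    simp
  set f : Fin n → ℝ := fun i => (if i = (0 : Fin n) then (1:ℝ) else 0) -
    (if i = (1 : Fin n) then (1:ℝ) else 0) with hf
  have hf0 : f 0 = 1 := by simp [hf, h01]
  have hfs : ∑ i, f i = 0 := by
    rw [hf, Finset.sum_sub_distrib]
    rw [Finset.sum_ite_eq' Finset.univ (0 : Fin n) (fun _ => (1:ℝ)),
      Finset.sum_ite_eq' Finset.univ (1 : Fin n) (fun _ => (1:ℝ))]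
    simp
  have hsum1 : (∑ _k : Fin n, (1:ℝ)) = (n : ℝ) := by
    simp
  apply Set.eq_of_subset_of_subset
  · intro c hc
    obtain ⟨v, hv0, hv⟩ := spectrum_exists_eigvec hc
    have hc1 : ∀ (a : ℝ) (u : Fin n × Fin n → ℝ),
        (A2 n - a • 1) *ᵥ u = A2 n *ᵥ u - a • u := by
      intro a u
      rw [sub_mulVec, smul_mulVec, one_mulVec]
    have e1 : (A2 n + (2:ℝ) • 1) *ᵥ v = (c + 2) • v := by
      rw [add_mulVec, smul_mulVec, one_mulVec, hv, ← add_smul]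
    have e2 : (A2 n - ((n:ℝ) - 2) • 1) *ᵥ ((c + 2) • v)
        = ((c - ((n:ℝ) - 2)) * (c + 2)) • v := by
      rw [hc1, mulVec_smul, hv]
      module
    have e3 : (A2 n - (2 * (n:ℝ) - 2) • 1) *ᵥ (((c - ((n:ℝ) - 2)) * (c + 2)) • v)
        = ((c - (2 * (n:ℝ) - 2)) * ((c - ((n:ℝ) - 2)) * (c + 2))) • v := by
      rw [hc1, mulVec_smul, hv]
      module
    have hall : ((A2 n - (2 * (n:ℝ) - 2) • 1) *
          ((A2 n - ((n:ℝ) - 2) • 1) * (A2 n + (2:ℝ) • 1))) *ᵥ v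
        = ((c - (2 * (n:ℝ) - 2)) * ((c - ((n:ℝ) - 2)) * (c + 2))) • v := by
      rw [← mulVec_mulVec, ← mulVec_mulVec, e1, e2, e3]
    rw [A2cubic, zero_mulVec] at hall
    have hscal : (c - (2 * (n:ℝ) - 2)) * ((c - ((n:ℝ) - 2)) * (c + 2)) = 0 := by
      rcases smul_eq_zero.mp hall.symm with h | h
      · exact h
      · exact absurd h hv0
    rcases mul_eq_zero.mp hscal with h | h
    · left; linarith [sub_eq_zero.mp h]
    · rcases mul_eq_zero.mp h with h' | h'
      · right; left; linarith [sub_eq_zero.mp h']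
      · right; right
        show c = -2
        linarith
  · intro c hc
    have hmv : ∀ (F G : Fin n → ℝ) (v : Fin n × Fin n → ℝ),
        (∀ q : Fin n × Fin n, v q = F q.1 * G q.2) →
        ∀ p : Fin n × Fin n, (A2 n *ᵥ v) p =
          ((∑ k, F k) - F p.1) * G p.2 + F p.1 * ((∑ l, G l) - G p.2) := by
      intro F G v hveq p
      rw [show v = fun q : Fin n × Fin n => F q.1 * G q.2 from funext hveq]
      rw [A2_mulVec]
    rcases hc with h | h | h
    · subst h
      apply eig_mem_spectrum (v := fun _ : Fin n × Fin n => (1:ℝ))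
      · intro hz
        have := congrFun hz ((0 : Fin n), (0 : Fin n))
        simpa using this
      · funext p
        rw [hmv (fun _ => (1:ℝ)) (fun _ => (1:ℝ)) _ (fun q => by simp) p]
        simp only [Pi.smul_apply, smul_eq_mul, hsum1]
        ring
    · subst h
      apply eig_mem_spectrum (v := fun q : Fin n × Fin n => f q.1)
      · intro hz
        have := congrFun hz ((0 : Fin n), (0 : Fin n))
        rw [hf0] at this
        simpa using this
      · funext p
        rw [hmv f (fun _ => (1:ℝ)) _ (fun q => by simp) p]
        simp only [Pi.smul_apply, smul_eq_mul, hsum1, hfs]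
        ring
    · subst h
      apply eig_mem_spectrum (v := fun q : Fin n × Fin n => f q.1 * f q.2)
      · intro hz
        have := congrFun hz ((0 : Fin n), (0 : Fin n))
        rw [hf0] at this
        simpa using this
      · funext p
        rw [hmv f f _ (fun q => rfl) p]
        simp only [Pi.smul_apply, smul_eq_mul, hfs]
        ring

lemma hammingDist_fin_two (u v : Fin 2 → Fin n) :
    hammingDist u v = (if u 0 = v 0 then 0 else 1) + (if u 1 = v 1 then 0 else 1) := by
  show (Finset.univ.filter fun i => u i ≠ v i).card = _
  rw [Finset.card_filter, Fin.sum_univ_two]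
  congr 1 <;> rw [ite_not]

lemma reindex_Hamm :
    (Matrix.reindexAlgEquiv ℝ ℝ (finTwoArrowEquiv (Fin n))) (HammingAdjM 2 n) = A2 n := by
  ext p q
  obtain ⟨i, j⟩ := p
  obtain ⟨k, l⟩ := q
  rw [reindexAlgEquiv_apply, reindex_apply, submatrix_apply]
  show (if hammingDist ((finTwoArrowEquiv (Fin n)).symm (i, j))
      ((finTwoArrowEquiv (Fin n)).symm (k, l)) = 1 then (1:ℝ) else 0) = _
  have hs : ∀ a b : Fin n, (finTwoArrowEquiv (Fin n)).symm (a, b) = ![a, b] := fun _ _ => rfl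
  rw [hs, hs, hammingDist_fin_two]
  by_cases hik : i = k <;> by_cases hjl : j = l <;>
    simp [A2, Bmat, Jmat, Matrix.add_apply, Matrix.smul_apply, Matrix.one_apply,
      kroneckerMap_apply, hik, hjl]

lemma spectrum_Hamm (hn : 3 ≤ n) :
    spectrum ℝ (HammingAdjM 2 n) = {2 * (n:ℝ) - 2, (n:ℝ) - 2, -2} := by
  rw [← AlgEquiv.spectrum_eq (Matrix.reindexAlgEquiv ℝ ℝ (finTwoArrowEquiv (Fin n)))
    (HammingAdjM 2 n), reindex_Hamm, spectrum_A2 n hn]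

lemma ncard_Hamm (hn : 3 ≤ n) : (spectrum ℝ (HammingAdjM 2 n)).ncard = 3 := by
  rw [spectrum_Hamm n hn]
  have hn' : (3:ℝ) ≤ (n:ℝ) := by exact_mod_cast hn
  rw [Set.ncard_insert_of_notMem, Set.ncard_pair]
  · intro h
    linarith
  · simp only [Set.mem_insert_iff, Set.mem_singleton_iff]
    push_neg
    exact ⟨fun h => by linarith, fun h => by linarith⟩

end Rook

lemma adjM_mem (n d : ℕ) : HammingAdjM d n ∈ Sset (HammingG d n) := by
  constructor
  · show (HammingAdjM d n)ᵀ = HammingAdjM d n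
    ext u v
    show (HammingAdjM d n) v u = HammingAdjM d n u v
    unfold HammingAdjM
    rw [hammingDist_comm]
  · intro u v huv
    have hA : (HammingG d n).Adj u v ↔ hammingDist u v = 1 := Iff.rfl
    rw [hA]
    show (if hammingDist u v = 1 then (1:ℝ) else 0) ≠ 0 ↔ hammingDist u v = 1
    split_ifs with h
    · simpa using h
    · simpa using h

lemma part1 {n d : ℕ} (hn : 3 ≤ n) (hd : 2 ≤ d) :
    ∀ M ∈ Sset (HammingG d n), 3 ≤ (spectrum ℝ M).ncard := by
  haveI : NeZero n := ⟨by omega⟩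
  intro M hM
  by_contra hcon
  push_neg at hcon
  have hfin : (spectrum ℝ M).Finite := Matrix.finite_spectrum M
  obtain ⟨a, b, hsub⟩ : ∃ a b : ℝ, spectrum ℝ M ⊆ {a, b} := by
    have h3 : (spectrum ℝ M).ncard = 0 ∨ (spectrum ℝ M).ncard = 1 ∨
        (spectrum ℝ M).ncard = 2 := by omega
    rcases h3 with h | h | h
    · rw [Set.ncard_eq_zero hfin] at h
      exact ⟨0, 1, by rw [h]; exact Set.empty_subset _⟩
    · rw [Set.ncard_eq_one] at h
      obtain ⟨a, ha⟩ := h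
      exact ⟨a, a, by rw [ha]; simp⟩
    · rw [Set.ncard_eq_two] at h
      obtain ⟨a, b, _, hab⟩ := h
      exact ⟨a, b, le_of_eq hab⟩
  have hq := symm_quadratic hM.1 hsub
  exact no_two hn hd hM (a + b) (-(a * b))
    (by rw [hq, neg_smul, ← sub_eq_add_neg])

/-- For `n ≥ 3` and `d ≥ 2`, every `M ∈ S(H(d,n))` has at least `3`
distinct eigenvalues, i.e. `q(H(d,n)) ≥ 3`.  Moreover for `d = 2` the adjacency matrix of
`H(2,n)` has exactly `3` distinct eigenvalues, so `q(H(2,n)) = 3`. -/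
theorem stmt_16 (n d : ℕ) (hn : 3 ≤ n) (hd : 2 ≤ d) :
    (∀ M ∈ Sset (HammingG d n), 3 ≤ (spectrum ℝ M).ncard) ∧
    3 ≤ minQ (HammingG d n) ∧
    (d = 2 → (spectrum ℝ (HammingAdjM d n)).ncard = 3 ∧ minQ (HammingG d n) = 3) := by
  have hminQ : ∀ d' : ℕ, 2 ≤ d' → 3 ≤ minQ (HammingG d' n) := by
    intro d' hd'
    have hne : {k : ℕ | ∃ M ∈ Sset (HammingG d' n), (spectrum ℝ M).ncard = k}.Nonempty :=
      ⟨(spectrum ℝ (HammingAdjM d' n)).ncard, HammingAdjM d' n, adjM_mem n d', rfl⟩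
    have hmem := Nat.sInf_mem hne
    obtain ⟨M, hM, hMk⟩ := hmem
    show 3 ≤ sInf {k : ℕ | ∃ M ∈ Sset (HammingG d' n), (spectrum ℝ M).ncard = k}
    rw [← hMk]
    exact part1 hn hd' M hM
  refine ⟨part1 hn hd, hminQ d hd, ?_⟩
  intro hd2
  subst hd2
  have h3 := ncard_Hamm n hn
  refine ⟨h3, le_antisymm ?_ (hminQ 2 le_rfl)⟩
  exact Nat.sInf_le ⟨HammingAdjM 2 n, adjM_mem n 2, h3⟩
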